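/- arXiv:1910.14147 — 2 statements merged into one kernel-verified Lean document; each statement's English description precedes it below -/
import Mathlib

section
/- (Lemma 1 / Proposition, Finite phase I) Assume λ₁ < 0 and g⁽¹⁾ = gᵀv₁ ≠ 0. Let 0 < η < 1/β and let the plain gradient-descent iterates be defined by z_{t+1} = z_t − η(Hz_t + g) from the initialization z₀ = −α·g/‖g‖₂ where g ≠ 0, 0 < α < 1, and α·|gᵀHg| < ‖g‖₂³. If T₁ is an index such that ‖z_t‖₂ < 1 for all t ≤ T₁ and ‖z_{T₁+1}‖₂ ≥ 1, then T₁ ≤ [log(1/(η·|g⁽¹⁾|) − 1/(η·λ₁)) − log(−z₀⁽¹⁾/(η·g⁽¹⁾) − 1/(η·λ₁))] / log(1 − η·λ₁), where a⁽¹⁾ denotes aᵀv₁ for a vector a. -/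
open Matrix

/-- The Euclidean (`ℓ₂`) norm of a vector in `ℝⁿ`. -/
noncomputable def enorm {n : ℕ} (x : Fin n → ℝ) : ℝ := Real.sqrt (∑ i, x i ^ 2)


lemma enorm_neg' {n : ℕ} (x : Fin n → ℝ) : _root_.enorm (-x) = _root_.enorm x := by
  unfold _root_.enorm; congr 1; apply Finset.sum_congr rfl; intro i _; simp

lemma abs_dot_le {n : ℕ} (x y : Fin n → ℝ) : |x ⬝ᵥ y| ≤ _root_.enorm x * _root_.enorm y := by
  rw [abs_le]
  refine ⟨?_, Real.sum_mul_le_sqrt_mul_sqrt Finset.univ x y⟩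
  have h2 : ((-x) ⬝ᵥ y) ≤ _root_.enorm (-x) * _root_.enorm y :=
    Real.sum_mul_le_sqrt_mul_sqrt Finset.univ (-x) y
  rw [neg_dotProduct, enorm_neg'] at h2
  linarith

/-- `β` is the (Euclidean) operator norm of `H`: the least nonnegative constant `c`
with `‖Hx‖₂ ≤ c ‖x‖₂` for all `x`. -/
def IsOpNorm {n : ℕ} (H : Matrix (Fin n) (Fin n) ℝ) (β : ℝ) : Prop :=
  IsLeast {c : ℝ | 0 ≤ c ∧ ∀ x : Fin n → ℝ, _root_.enorm (H.mulVec x) ≤ c * _root_.enorm x} β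

/-- (Finite phase I.) In the easy case (`λ₁ < 0`, `g⁽¹⁾ = gᵀv₁ ≠ 0`), for plain gradient
descent `z_{t+1} = z_t − η (H z_t + g)` with `0 < η < 1/β`, initialized at
`z₀ = −α g/‖g‖` with `0 < α < 1`, `α |gᵀHg| < ‖g‖³`: if `T₁` satisfies `‖z_t‖₂ < 1` for
all `t ≤ T₁` and `‖z_{T₁+1}‖₂ ≥ 1`, then
`T₁ ≤ [log(1/(η|g⁽¹⁾|) − 1/(ηλ₁)) − log(−z₀⁽¹⁾/(ηg⁽¹⁾) − 1/(ηλ₁))] / log(1 − ηλ₁)`. -/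
theorem finite_phaseI_iteration_bound {n : ℕ}
    (H : Matrix (Fin n) (Fin n) ℝ) (hH : H.IsSymm) (g : Fin n → ℝ) (hg : g ≠ 0)
    (lam1 : ℝ) (v1 : Fin n → ℝ)
    (hv1_unit : _root_.enorm v1 = 1) (hv1_eig : H.mulVec v1 = lam1 • v1)
    (hlam1_min : ∀ (μ : ℝ) (w : Fin n → ℝ), w ≠ 0 → H.mulVec w = μ • w → lam1 ≤ μ)
    (hlam1_neg : lam1 < 0) (hgv1 : g ⬝ᵥ v1 ≠ 0)
    (β : ℝ) (hβ : IsOpNorm H β)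
    (η : ℝ) (hη_pos : 0 < η) (hη_lt : η < 1 / β)
    (α : ℝ) (hα_pos : 0 < α) (hα_lt : α < 1)
    (hα_g : α * |g ⬝ᵥ H.mulVec g| < (_root_.enorm g) ^ 3)
    (z : ℕ → Fin n → ℝ)
    (hz0 : z 0 = (-(α / _root_.enorm g)) • g)
    (hrec : ∀ s, z (s + 1) = z s - η • (H.mulVec (z s) + g))
    (T1 : ℕ)
    (hT1_in : ∀ t ≤ T1, _root_.enorm (z t) < 1)
    (hT1_out : 1 ≤ _root_.enorm (z (T1 + 1))) :
    (T1 : ℝ) ≤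
      (Real.log (1 / (η * |g ⬝ᵥ v1|) - 1 / (η * lam1)) -
        Real.log (-(z 0 ⬝ᵥ v1) / (η * (g ⬝ᵥ v1)) - 1 / (η * lam1))) /
      Real.log (1 - η * lam1) := by
  set G := g ⬝ᵥ v1 with hGdef
  set L := lam1 with hLdef
  have hL0 : L ≠ 0 := ne_of_lt hlam1_neg
  have hGabs : 0 < |G| := abs_pos.mpr hgv1
  -- enorm g > 0
  have hNg : 0 < _root_.enorm g := by
    have := abs_dot_le g v1
    rw [hv1_unit, mul_one] at this
    linarith
  set N := _root_.enorm g with hNdef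
  -- projection recurrence
  have hstep : ∀ t, z (t + 1) ⬝ᵥ v1 = (1 - η * L) * (z t ⬝ᵥ v1) - η * G := by
    intro t
    rw [hrec t, sub_dotProduct, smul_dotProduct, add_dotProduct]
    have hsym : H.mulVec (z t) ⬝ᵥ v1 = z t ⬝ᵥ H.mulVec v1 := by
      rw [dotProduct_comm, dotProduct_mulVec, ← Matrix.mulVec_transpose, hH.eq, dotProduct_comm]
    rw [hsym, hv1_eig, dotProduct_smul]
    simp only [smul_eq_mul]
    ring
  -- closed form
  have hclosed : ∀ t, z t ⬝ᵥ v1 + G / L = (1 - η * L) ^ t * (z 0 ⬝ᵥ v1 + G / L) := by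
    intro t
    induction t with
    | zero => simp
    | succ t ih =>
      rw [hstep t, pow_succ]
      have : (1 - η * L) * (z t ⬝ᵥ v1) - η * G + G / L
          = (1 - η * L) * (z t ⬝ᵥ v1 + G / L) := by
        field_simp
        ring
      rw [this, ih]
      ring
  have hz0v : z 0 ⬝ᵥ v1 = -(α / N) * G := by
    rw [hz0, smul_dotProduct, smul_eq_mul]
  set r := 1 - η * L with hrdef
  have hr1 : 1 < r := by
    have : 0 < η * (-L) := mul_pos hη_pos (by linarith)
    simp only [hrdef]; nlinarith
  have hc0 : |z 0 ⬝ᵥ v1 + G / L| = |G| * (α / N - 1 / L) := by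
    rw [hz0v]
    have : -(α / N) * G + G / L = -((α / N - 1 / L) * G) := by ring
    rw [this, abs_neg, abs_mul, mul_comm]
    congr 1
    rw [abs_of_pos]
    have h1 : 0 < α / N := div_pos hα_pos hNg
    have h2 : 1 / L < 0 := div_neg_of_pos_of_neg one_pos hlam1_neg
    linarith
  -- key bound at T1
  have hxT1 : |z T1 ⬝ᵥ v1| < 1 := by
    have := abs_dot_le (z T1) v1
    rw [hv1_unit, mul_one] at this
    exact lt_of_le_of_lt this (hT1_in T1 le_rfl)
  have hkey : r ^ T1 * (|G| * (α / N - 1 / L)) ≤ |G| * (1 / |G| - 1 / L) := by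
    have h1 : |z T1 ⬝ᵥ v1 + G / L| ≤ |z T1 ⬝ᵥ v1| + |G / L| := abs_add_le _ _
    have h2 : |G / L| = |G| * (-(1 / L)) := by
      rw [abs_div, abs_of_neg hlam1_neg, div_neg, mul_neg, mul_one_div]
    have h3 : |z T1 ⬝ᵥ v1 + G / L| = r ^ T1 * (|G| * (α / N - 1 / L)) := by
      rw [hclosed T1, abs_mul, abs_of_pos (pow_pos (by linarith : (0:ℝ) < r) T1), hc0]
    have hGL : |G| * (1 / |G|) = 1 := by field_simp
    have hexp : |G| * (1 / |G| - 1 / L) = |G| * (1 / |G|) + |G| * (-(1 / L)) := by ring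
    linarith
  -- positivity of B
  have hB : 0 < α / N - 1 / L := by
    have h1 : 0 < α / N := div_pos hα_pos hNg
    have h2 : 1 / L < 0 := div_neg_of_pos_of_neg one_pos hlam1_neg
    linarith
  have hA : 0 < 1 / |G| - 1 / L := by
    have h1 : 0 < 1 / |G| := by positivity
    have h2 : 1 / L < 0 := div_neg_of_pos_of_neg one_pos hlam1_neg
    linarith
  have hrpow : r ^ T1 ≤ (1 / |G| - 1 / L) / (α / N - 1 / L) := by
    rw [le_div_iff₀ hB]
    calc r ^ T1 * (α / N - 1 / L) = (r ^ T1 * (|G| * (α / N - 1 / L))) / |G| := by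
          field_simp
      _ ≤ (|G| * (1 / |G| - 1 / L)) / |G| := by gcongr
      _ = 1 / |G| - 1 / L := by field_simp
  -- rewrite the target logs
  have hAeq : 1 / (η * |G|) - 1 / (η * L) = (1 / |G| - 1 / L) / η := by
    field_simp
  have hBeq : -(z 0 ⬝ᵥ v1) / (η * G) - 1 / (η * L) = (α / N - 1 / L) / η := by
    rw [hz0v]
    field_simp
  have hlogr : 0 < Real.log r := Real.log_pos hr1
  rw [hAeq, hBeq, le_div_iff₀ hlogr]
  have h1 : Real.log (r ^ T1) ≤ Real.log ((1 / |G| - 1 / L) / (α / N - 1 / L)) :=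
    Real.log_le_log (pow_pos (by linarith) T1) hrpow
  rw [Real.log_pow] at h1
  have h2 : Real.log ((1 / |G| - 1 / L) / (α / N - 1 / L))
      = Real.log ((1 / |G| - 1 / L) / η) - Real.log ((α / N - 1 / L) / η) := by
    rw [Real.log_div (ne_of_gt hA) (ne_of_gt hB), Real.log_div (ne_of_gt hA) (ne_of_gt hη_pos),
      Real.log_div (ne_of_gt hB) (ne_of_gt hη_pos)]
    ring
  push_cast
  linarith
end

section
/- (One-step descent inequality) Let β be the operator norm of H, let 0 < η with η·β ≤ 1, and let z ∈ ℝⁿ satisfy zᵀ(Hz + g) ≤ 0 and zᵀH(Hz + g) ≥ β·zᵀ(Hz + g). Then the gradient step z' = z − η(Hz + g) satisfies z'ᵀ(Hz' + g) ≤ (1 − β·η)·zᵀ(Hz + g) − η·(1 − η·β)·‖Hz + g‖₂² ≤ 0. -/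
open Matrix

lemma enorm_nonneg' {n : ℕ} (x : Fin n → ℝ) : 0 ≤ _root_.enorm x := Real.sqrt_nonneg _

lemma enorm_sq' {n : ℕ} (x : Fin n → ℝ) : _root_.enorm x ^ 2 = x ⬝ᵥ x := by
  rw [_root_.enorm, Real.sq_sqrt (Finset.sum_nonneg fun i _ => sq_nonneg _)]
  simp [dotProduct, sq]

lemma dot_le_enorm_mul_enorm {n : ℕ} (x y : Fin n → ℝ) :
    x ⬝ᵥ y ≤ _root_.enorm x * _root_.enorm y := by
  simpa [dotProduct, _root_.enorm] using Real.sum_mul_le_sqrt_mul_sqrt Finset.univ x y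

/-- (One-step descent inequality.) If `zᵀ(Hz + g) ≤ 0` and `zᵀH(Hz + g) ≥ β zᵀ(Hz + g)`,
then the gradient step `z' = z − η (Hz + g)` with `0 < η`, `ηβ ≤ 1` satisfies
`z'ᵀ(Hz' + g) ≤ (1 − βη) zᵀ(Hz + g) − η(1 − ηβ)‖Hz + g‖₂² ≤ 0`. -/
theorem one_step_descent_inequality {n : ℕ}
    (H : Matrix (Fin n) (Fin n) ℝ) (hH : H.IsSymm) (g : Fin n → ℝ)
    (β : ℝ) (hβ : IsOpNorm H β)
    (η : ℝ) (hη_pos : 0 < η) (hηβ : η * β ≤ 1)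
    (z : Fin n → ℝ)
    (hz1 : z ⬝ᵥ (H.mulVec z + g) ≤ 0)
    (hz2 : z ⬝ᵥ H.mulVec (H.mulVec z + g) ≥ β * (z ⬝ᵥ (H.mulVec z + g))) :
    (z - η • (H.mulVec z + g)) ⬝ᵥ (H.mulVec (z - η • (H.mulVec z + g)) + g) ≤
        (1 - β * η) * (z ⬝ᵥ (H.mulVec z + g)) -
          η * (1 - η * β) * (_root_.enorm (H.mulVec z + g)) ^ 2 ∧
      (1 - β * η) * (z ⬝ᵥ (H.mulVec z + g)) -
          η * (1 - η * β) * (_root_.enorm (H.mulVec z + g)) ^ 2 ≤ 0 := by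
  set v := H.mulVec z + g with hv
  have hβ0 : 0 ≤ β := hβ.1.1
  have hnorm : _root_.enorm (H.mulVec v) ≤ β * _root_.enorm v := hβ.1.2 v
  -- vᵀHv ≤ β ‖v‖²
  have hvHv : v ⬝ᵥ H.mulVec v ≤ β * (_root_.enorm v ^ 2) := by
    calc v ⬝ᵥ H.mulVec v ≤ _root_.enorm v * _root_.enorm (H.mulVec v) := dot_le_enorm_mul_enorm _ _
    _ ≤ _root_.enorm v * (β * _root_.enorm v) := by
        exact mul_le_mul_of_nonneg_left hnorm (enorm_nonneg' v)
    _ = β * (_root_.enorm v ^ 2) := by ring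
  have hvv : _root_.enorm v ^ 2 = v ⬝ᵥ v := enorm_sq' v
  -- expand the left-hand side
  have hexp : (z - η • v) ⬝ᵥ (H.mulVec (z - η • v) + g) =
      z ⬝ᵥ v - η * (z ⬝ᵥ H.mulVec v) - η * (v ⬝ᵥ v) + η ^ 2 * (v ⬝ᵥ H.mulVec v) := by
    rw [Matrix.mulVec_sub, Matrix.mulVec_smul]
    simp only [sub_dotProduct, dotProduct_add, dotProduct_sub, smul_dotProduct,
      dotProduct_smul, smul_eq_mul, hv]
    ring
  constructor
  · rw [hexp, hvv]
    rw [hvv] at hvHv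
    have a := mul_le_mul_of_nonneg_left hz2 hη_pos.le
    have b := mul_le_mul_of_nonneg_left hvHv (sq_nonneg η)
    nlinarith
  · have h1 : (1 - β * η) * (z ⬝ᵥ v) ≤ 0 := by
      apply mul_nonpos_of_nonneg_of_nonpos _ hz1
      nlinarith
    have h2 : 0 ≤ η * (1 - η * β) * (_root_.enorm v) ^ 2 :=
      mul_nonneg (mul_nonneg hη_pos.le (by linarith)) (sq_nonneg _)
    linarith
end
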